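/- Intersection numbers of subspace designs: let D be a t-(n,r,λ) design over F_q, and let I, J be subspaces of F_q^n of dimensions i, j with i + j ≤ t and I ∩ J = {0}. Then the number of blocks U ∈ D with I ⊆ U and J ∩ U = {0} equals q^{j(r−i)} · λ · [n−i−j choose r−i]_q / [n−t choose r−t]_q; in particular it depends only on i and j. -/

import Mathlib

open Module Submodule Set
set_option linter.unusedSectionVars false
set_option maxHeartbeats 1000000

noncomputable def numSubspaces (F : Type*) [Field F] (N M : ℕ) : ℕ :=
  Set.ncard {W : Submodule F (Fin N → F) | Module.finrank F W = M}

section Aux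
variable {F : Type*} [Field F] [Fintype F]

theorem finiteSubmodule (F : Type*) [Field F] [Fintype F] (V : Type*) [AddCommGroup V] [Module F V]
    [FiniteDimensional F V] : Finite (Submodule F V) := by
  haveI : Finite V := Module.finite_of_finite F
  haveI : Finite (Set V) := inferInstance
  exact Finite.of_injective (fun W : Submodule F V => (W : Set V)) SetLike.coe_injective

variable {V V' : Type*} [AddCommGroup V] [Module F V] [FiniteDimensional F V]
  [AddCommGroup V'] [Module F V'] [FiniteDimensional F V']

theorem ncard_grass_congr (e : V ≃ₗ[F] V') (k : ℕ) :
    {W : Submodule F V | finrank F W = k}.ncard = {W : Submodule F V' | finrank F W = k}.ncard := by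
  rw [← Nat.card_coe_set_eq, ← Nat.card_coe_set_eq]
  refine Nat.card_congr ((Submodule.orderIsoMapComap e).toEquiv.subtypeEquiv fun W => ?_)
  simp only [Set.mem_setOf_eq, Submodule.orderIsoMapComap, RelIso.coe_fn_toEquiv]
  constructor
  · rintro rfl; exact (LinearEquiv.finrank_map_eq e W).symm ▸ rfl
  · intro h; rw [← LinearEquiv.finrank_map_eq e W]; exact h

theorem ncard_grass (k : ℕ) :
    {W : Submodule F V | finrank F W = k}.ncard = numSubspaces F (finrank F V) k :=
  ncard_grass_congr ((Module.finBasis F V).equivFun) k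


-- transfer along a submodule inclusion
theorem ncard_restrict (X : Submodule F V) (Q : Submodule F X → Prop) :
    {U : Submodule F V | U ≤ X ∧ Q (U.comap X.subtype)}.ncard
      = {W : Submodule F X | Q W}.ncard := by
  rw [← Nat.card_coe_set_eq, ← Nat.card_coe_set_eq]
  refine Nat.card_congr ?_
  refine { toFun := fun U => ⟨(U : Submodule F V).comap X.subtype, U.2.2⟩,
           invFun := fun W => ⟨(W : Submodule F X).map X.subtype, ⟨map_subtype_le X W, ?_⟩⟩,
           left_inv := ?_, right_inv := ?_ }
  · rw [Submodule.comap_map_eq, ker_subtype, sup_bot_eq]; exact W.2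
  · rintro ⟨U, hUX, hQ⟩
    ext1; simp only
    rw [Submodule.map_comap_subtype, inf_eq_right.mpr hUX]
  · rintro ⟨W, hQ⟩
    ext1; simp only
    rw [Submodule.comap_map_eq, ker_subtype, sup_bot_eq]

-- transfer along a quotient map
theorem ncard_quot (p : Submodule F V) (Q : Submodule F (V ⧸ p) → Prop) :
    {U : Submodule F V | p ≤ U ∧ Q (U.map p.mkQ)}.ncard
      = {W : Submodule F (V ⧸ p) | Q W}.ncard := by
  rw [← Nat.card_coe_set_eq, ← Nat.card_coe_set_eq]
  refine Nat.card_congr ?_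
  have hmc : ∀ W : Submodule F (V ⧸ p), (W.comap p.mkQ).map p.mkQ = W := by
    intro W
    rw [Submodule.map_comap_eq, Submodule.range_mkQ, top_inf_eq]
  refine { toFun := fun U => ⟨(U : Submodule F V).map p.mkQ, U.2.2⟩,
           invFun := fun W => ⟨(W : Submodule F (V ⧸ p)).comap p.mkQ,
             ⟨fun x hx => by
                simp only [Submodule.mem_comap]
                rw [show p.mkQ x = 0 from (Submodule.Quotient.mk_eq_zero p).mpr hx]
                exact zero_mem _, by rw [hmc]; exact W.2⟩⟩,
           left_inv := ?_, right_inv := ?_ }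
  · rintro ⟨U, hpU, hQ⟩
    ext1; simp only
    rw [Submodule.comap_map_eq, Submodule.ker_mkQ, sup_eq_left.mpr hpU]
  · rintro ⟨W, hQ⟩
    ext1; simp only [hmc]

theorem finrank_comap_subtype {X U : Submodule F V} (hUX : U ≤ X) :
    finrank F (U.comap X.subtype) = finrank F U := by
  rw [← Submodule.finrank_map_subtype_eq X (U.comap X.subtype),
    Submodule.map_comap_subtype, inf_eq_right.mpr hUX]

theorem comap_subtype_le_iff {X U U' : Submodule F V} (hUX : U ≤ X) (hU'X : U' ≤ X) :
    U.comap X.subtype ≤ U'.comap X.subtype ↔ U ≤ U' := by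
  constructor
  · intro h
    have := Submodule.map_mono (f := X.subtype) h
    rwa [Submodule.map_comap_subtype, Submodule.map_comap_subtype,
      inf_eq_right.mpr hUX, inf_eq_right.mpr hU'X] at this
  · exact fun h => Submodule.comap_mono h

theorem finrank_map_mkQ_add {p U : Submodule F V} (hpU : p ≤ U) :
    finrank F (U.map p.mkQ) + finrank F p = finrank F U := by
  have h3 := LinearMap.finrank_range_add_finrank_ker (p.mkQ ∘ₗ U.subtype)
  rw [LinearMap.range_comp, Submodule.range_subtype, LinearMap.ker_comp, Submodule.ker_mkQ,
    finrank_comap_subtype hpU] at h3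
  exact h3

theorem finrank_map_mkQ_disjoint {p J : Submodule F V} (hpJ : p ⊓ J = ⊥) :
    finrank F (J.map p.mkQ) = finrank F J := by
  have h3 := LinearMap.finrank_range_add_finrank_ker (p.mkQ ∘ₗ J.subtype)
  rw [LinearMap.range_comp, Submodule.range_subtype, LinearMap.ker_comp, Submodule.ker_mkQ] at h3
  have hker : p.comap J.subtype = ⊥ := by
    have := Submodule.map_comap_subtype J p
    apply_fun Submodule.map J.subtype
    · rw [Submodule.map_bot, Submodule.map_comap_subtype, inf_comm, hpJ]
    · exact Submodule.map_injective_of_injective (Submodule.injective_subtype J)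
  rw [hker, finrank_bot, add_zero] at h3
  exact h3

theorem map_mkQ_disjoint_iff {p U J : Submodule F V} (hpU : p ≤ U) (hpJ : p ⊓ J = ⊥) :
    U.map p.mkQ ⊓ J.map p.mkQ = ⊥ ↔ U ⊓ J = ⊥ := by
  constructor
  · intro h
    rw [eq_bot_iff]
    rintro x ⟨hxU, hxJ⟩
    have hx : p.mkQ x ∈ U.map p.mkQ ⊓ J.map p.mkQ :=
      ⟨Submodule.mem_map_of_mem hxU, Submodule.mem_map_of_mem hxJ⟩
    rw [h, Submodule.mem_bot] at hx
    have hxp : x ∈ p := by rwa [← Submodule.Quotient.mk_eq_zero p]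
    have : x ∈ p ⊓ J := ⟨hxp, hxJ⟩
    rwa [hpJ] at this
  · intro h
    rw [eq_bot_iff]
    rintro z ⟨hzU, hzJ⟩
    obtain ⟨u, hu, hzu⟩ := hzU
    obtain ⟨w, hw, hzw⟩ := hzJ
    have : u - w ∈ p := by
      rw [← Submodule.ker_mkQ p, LinearMap.mem_ker, map_sub, hzu, hzw, sub_self]
    have hwU : w ∈ U := by
      have := U.sub_mem (hpU this) hu
      simpa using this
    have : w ∈ U ⊓ J := ⟨hwU, hw⟩
    rw [h, Submodule.mem_bot] at this
    rw [Submodule.mem_bot, ← hzw, this, map_zero]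

theorem ncard_compl (p : Submodule F V) :
    {W : Submodule F V | W ⊓ p = ⊥ ∧ W ⊔ p = ⊤}.ncard
      = Fintype.card F ^ (finrank F p * (finrank F V - finrank F p)) := by
  haveI : Finite V := Module.finite_of_finite F
  have hset : {W : Submodule F V | W ⊓ p = ⊥ ∧ W ⊔ p = ⊤} = {W | IsCompl p W} := by
    ext W
    simp only [Set.mem_setOf_eq, isCompl_iff, disjoint_iff, codisjoint_iff, inf_comm, sup_comm]
  rw [hset, ← Nat.card_coe_set_eq]
  have e1 : {W : Submodule F V // IsCompl p W} ≃ {f : V →ₗ[F] p // ∀ x : p, f x = x} :=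
    p.isComplEquivProj
  obtain ⟨q, hq⟩ := p.exists_isCompl
  let f₀ : V →ₗ[F] p := p.linearProjOfIsCompl q hq
  have hf₀ : ∀ x : p, f₀ x = x := fun x => Submodule.linearProjOfIsCompl_apply_left hq x
  have e2 : {f : V →ₗ[F] p // ∀ x : p, f x = x} ≃ {g : V →ₗ[F] p // ∀ x : p, g x = 0} :=
    { toFun := fun f => ⟨f.1 - f₀, fun x => by simp [f.2 x, hf₀ x]⟩
      invFun := fun g => ⟨g.1 + f₀, fun x => by simp [g.2 x, hf₀ x]⟩
      left_inv := fun f => by ext1; simp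
      right_inv := fun g => by ext1; simp }
  have e3 : ((V ⧸ p) →ₗ[F] p) ≃ {g : V →ₗ[F] p // ∀ x : p, g x = 0} :=
    { toFun := fun h => ⟨h ∘ₗ p.mkQ, fun x => by
        simp only [LinearMap.comp_apply]
        rw [show p.mkQ x = 0 from (Submodule.Quotient.mk_eq_zero p).mpr x.2, map_zero]⟩
      invFun := fun g => p.liftQ g.1 (fun x hx => g.2 ⟨x, hx⟩)
      left_inv := fun h => by
        apply Submodule.linearMap_qext
        ext x
        simp
        exact Submodule.liftQ_apply _ _ _
      right_inv := fun g => by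
        ext1
        apply LinearMap.ext
        intro x
        simp
        exact Submodule.liftQ_apply _ _ _ }
  rw [show (Nat.card ↑{W : Submodule F V | IsCompl p W}) = Nat.card ((V ⧸ p) →ₗ[F] p) from
    Nat.card_congr (e1.trans (e2.trans e3.symm))]
  haveI : Finite ((V ⧸ p) →ₗ[F] p) := Module.finite_of_finite F
  haveI : Fintype ((V ⧸ p) →ₗ[F] p) := Fintype.ofFinite _
  rw [Nat.card_eq_fintype_card, card_eq_pow_finrank (K := F), Module.finrank_linearMap]
  have hq2 := Submodule.finrank_quotient_add_finrank p
  have : finrank F (V ⧸ p) = finrank F V - finrank F p := by omega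
  rw [this, Nat.mul_comm]


/-- Number of complements of `J` inside a fixed `Y` with `J ≤ Y`. -/
theorem ncard_compl_in (J Y : Submodule F V) (hJY : J ≤ Y) :
    {W : Submodule F V | W ⊓ J = ⊥ ∧ W ⊔ J = Y}.ncard
      = Fintype.card F ^ (finrank F J * (finrank F Y - finrank F J)) := by
  have hinj := Submodule.map_injective_of_injective (Submodule.injective_subtype Y)
  have hseteq : {W : Submodule F V | W ⊓ J = ⊥ ∧ W ⊔ J = Y}
      = {W : Submodule F V | W ≤ Y ∧
          ((W.comap Y.subtype) ⊓ (J.comap Y.subtype) = ⊥ ∧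
           (W.comap Y.subtype) ⊔ (J.comap Y.subtype) = ⊤)} := by
    ext W
    simp only [Set.mem_setOf_eq]
    constructor
    · rintro ⟨hdisj, hsup⟩
      have hWY : W ≤ Y := le_trans le_sup_left hsup.le
      refine ⟨hWY, ?_, ?_⟩
      · rw [← Submodule.comap_inf, hdisj]
        rw [Submodule.comap_bot, Submodule.ker_subtype]
      · apply hinj
        rw [Submodule.map_sup, Submodule.map_comap_subtype, Submodule.map_comap_subtype,
          inf_eq_right.mpr hWY, inf_eq_right.mpr hJY, hsup, Submodule.map_top,
          Submodule.range_subtype]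
    · rintro ⟨hWY, hdisj, hsup⟩
      have h1 := congrArg (Submodule.map Y.subtype) hdisj
      rw [Submodule.map_inf _ (Submodule.injective_subtype Y), Submodule.map_comap_subtype,
        Submodule.map_comap_subtype, inf_eq_right.mpr hWY, inf_eq_right.mpr hJY,
        Submodule.map_bot] at h1
      have h2 := congrArg (Submodule.map Y.subtype) hsup
      rw [Submodule.map_sup, Submodule.map_comap_subtype, Submodule.map_comap_subtype,
        inf_eq_right.mpr hWY, inf_eq_right.mpr hJY, Submodule.map_top,
        Submodule.range_subtype] at h2
      exact ⟨h1, h2⟩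
  rw [hseteq, ncard_restrict Y (fun W' => W' ⊓ (J.comap Y.subtype) = ⊥ ∧
      W' ⊔ (J.comap Y.subtype) = ⊤), ncard_compl (J.comap Y.subtype),
    finrank_comap_subtype hJY]

theorem ncard_disjoint (J : Submodule F V) (k : ℕ) :
    {W : Submodule F V | finrank F W = k ∧ W ⊓ J = ⊥}.ncard
      = Fintype.card F ^ (finrank F J * k) * numSubspaces F (finrank F V - finrank F J) k := by
  haveI := finiteSubmodule F V
  haveI := finiteSubmodule F (V ⧸ J)
  classical
  haveI : Fintype (Submodule F V) := Fintype.ofFinite _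
  haveI : Fintype (Submodule F (V ⧸ J)) := Fintype.ofFinite _
  set S := {W : Submodule F V | finrank F W = k ∧ W ⊓ J = ⊥} with hS
  set T := {X : Submodule F (V ⧸ J) | finrank F X = k} with hT
  have hmap : ∀ W ∈ S.toFinset, W.map J.mkQ ∈ T.toFinset := by
    intro W hW
    rw [Set.mem_toFinset] at hW ⊢
    rw [hT, Set.mem_setOf_eq, finrank_map_mkQ_disjoint (by rw [inf_comm]; exact hW.2)]
    exact hW.1
  have hfiber : ∀ X ∈ T.toFinset, (S.toFinset.filter (fun W => W.map J.mkQ = X)).card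
      = Fintype.card F ^ (finrank F J * k) := by
    intro X hX
    rw [Set.mem_toFinset, hT, Set.mem_setOf_eq] at hX
    set Y := X.comap J.mkQ with hY
    have hJY : J ≤ Y := by
      intro x hx
      rw [hY, Submodule.mem_comap, show J.mkQ x = 0 from (Submodule.Quotient.mk_eq_zero J).mpr hx]
      exact zero_mem _
    have hmapY : Y.map J.mkQ = X := by
      rw [hY, Submodule.map_comap_eq, Submodule.range_mkQ, top_inf_eq]
    have hrkY : finrank F Y = k + finrank F J := by
      have := finrank_map_mkQ_add hJY
      rw [hmapY, hX] at this
      omega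
    have hfeq : S.toFinset.filter (fun W => W.map J.mkQ = X)
        = {W : Submodule F V | W ⊓ J = ⊥ ∧ W ⊔ J = Y}.toFinset := by
      ext W
      rw [Finset.mem_filter, Set.mem_toFinset, Set.mem_toFinset, hS, Set.mem_setOf_eq,
        Set.mem_setOf_eq]
      constructor
      · rintro ⟨⟨hrk, hdisj⟩, hmX⟩
        refine ⟨hdisj, ?_⟩
        rw [hY, ← hmX, Submodule.comap_map_eq, Submodule.ker_mkQ]
      · rintro ⟨hdisj, hsup⟩
        have hmX : W.map J.mkQ = X := by
          have : (W ⊔ J).map J.mkQ = X := by rw [hsup, hmapY]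
          rwa [Submodule.map_sup, Submodule.mkQ_map_self, sup_bot_eq] at this
        have hrk : finrank F W = k := by
          have h1 := Submodule.finrank_sup_add_finrank_inf_eq W J
          rw [hdisj, hsup, finrank_bot, add_zero, hrkY] at h1
          omega
        exact ⟨⟨hrk, hdisj⟩, hmX⟩
    rw [hfeq, ← Set.ncard_eq_toFinset_card', ncard_compl_in J Y hJY, hrkY]
    simp
  rw [Set.ncard_eq_toFinset_card' S, Finset.card_eq_sum_card_fiberwise hmap,
    Finset.sum_congr rfl hfiber, Finset.sum_const, smul_eq_mul,
    ← Set.ncard_eq_toFinset_card' T, hT, ncard_grass]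
  have : finrank F (V ⧸ J) = finrank F V - finrank F J := by
    have := Submodule.finrank_quotient_add_finrank J
    omega
  rw [this, Nat.mul_comm]


/-- Number of `k`-dim subspaces containing `I` and meeting `J` trivially, in any ambient
finite-dimensional space. -/
theorem ncard_complete (I J : Submodule F V) (hIJ : I ⊓ J = ⊥) (k : ℕ)
    (hik : finrank F I ≤ k) :
    {U : Submodule F V | finrank F U = k ∧ I ≤ U ∧ U ⊓ J = ⊥}.ncard
      = Fintype.card F ^ (finrank F J * (k - finrank F I)) *
        numSubspaces F (finrank F V - finrank F I - finrank F J) (k - finrank F I) := by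
  have hseteq : {U : Submodule F V | finrank F U = k ∧ I ≤ U ∧ U ⊓ J = ⊥}
      = {U : Submodule F V | I ≤ U ∧
          (finrank F (U.map I.mkQ) = k - finrank F I ∧ (U.map I.mkQ) ⊓ (J.map I.mkQ) = ⊥)} := by
    ext U
    simp only [Set.mem_setOf_eq]
    constructor
    · rintro ⟨hrk, hIU, hdisj⟩
      have h1 := finrank_map_mkQ_add hIU
      refine ⟨hIU, by omega, (map_mkQ_disjoint_iff hIU hIJ).mpr hdisj⟩
    · rintro ⟨hIU, hrk, hdisj⟩
      have h1 := finrank_map_mkQ_add hIU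
      exact ⟨by omega, hIU, (map_mkQ_disjoint_iff hIU hIJ).mp hdisj⟩
  rw [hseteq, ncard_quot I (fun W => finrank F W = k - finrank F I ∧ W ⊓ (J.map I.mkQ) = ⊥),
    ncard_disjoint (J.map I.mkQ) (k - finrank F I), finrank_map_mkQ_disjoint hIJ]
  have hq := Submodule.finrank_quotient_add_finrank I
  have : finrank F (V ⧸ I) - finrank F J = finrank F V - finrank F I - finrank F J := by omega
  rw [this]

/-- Number of `k`-dim subspaces between `I` and `X`. -/
theorem ncard_interval (I X : Submodule F V) (hIX : I ≤ X) (k : ℕ) (hik : finrank F I ≤ k) :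
    {I' : Submodule F V | finrank F I' = k ∧ I ≤ I' ∧ I' ≤ X}.ncard
      = numSubspaces F (finrank F X - finrank F I) (k - finrank F I) := by
  have hseteq : {I' : Submodule F V | finrank F I' = k ∧ I ≤ I' ∧ I' ≤ X}
      = {I' : Submodule F V | I' ≤ X ∧
          (finrank F (I'.comap X.subtype) = k ∧ (I.comap X.subtype) ≤ I'.comap X.subtype ∧
            I'.comap X.subtype ⊓ ⊥ = ⊥)} := by
    ext I'
    simp only [Set.mem_setOf_eq, inf_bot_eq, and_true]
    constructor
    · rintro ⟨hrk, hII', hI'X⟩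
      exact ⟨hI'X, by rw [finrank_comap_subtype hI'X]; exact hrk,
        (comap_subtype_le_iff hIX hI'X).mpr hII'⟩
    · rintro ⟨hI'X, hrk, hle⟩
      exact ⟨by rw [finrank_comap_subtype hI'X] at hrk; exact hrk,
        (comap_subtype_le_iff hIX hI'X).mp hle, hI'X⟩
  rw [hseteq, ncard_restrict X (fun W => finrank F W = k ∧ (I.comap X.subtype) ≤ W ∧ W ⊓ ⊥ = ⊥),
    ncard_complete (I.comap X.subtype) ⊥ (by rw [inf_bot_eq]) k
      (by rw [finrank_comap_subtype hIX]; exact hik)]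
  rw [finrank_comap_subtype hIX, finrank_bot]
  simp


theorem sum_filter_card_comm {α β : Type*} (S : Finset α) (T : Finset β) (R : α → β → Prop)
    [∀ a b, Decidable (R a b)] :
    ∑ a ∈ S, (T.filter (fun b => R a b)).card = ∑ b ∈ T, (S.filter (fun a => R a b)).card := by
  simp only [Finset.card_filter]
  exact Finset.sum_comm

instance finiteSubmodule' : Finite (Submodule F V) := by
  haveI : Finite V := Module.finite_of_finite F
  exact Finite.of_injective (fun W : Submodule F V => (W : Set V)) SetLike.coe_injective



theorem filter_toFinset_card {α : Type*} (s : Set α) (hs : s.Finite) (p : α → Prop)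
    [DecidablePred p] :
    (hs.toFinset.filter p).card = {x ∈ s | p x}.ncard := by
  rw [Set.ncard_eq_toFinset_card _ (hs.subset (Set.sep_subset s p))]
  congr 1
  ext x
  simp [Set.Finite.mem_toFinset]

theorem numSubspaces_one_pos {m : ℕ} (hm : 1 ≤ m) : 0 < numSubspaces F m 1 := by
  rw [numSubspaces, Set.ncard_pos (Set.toFinite _)]
  have hv : (fun _ => (1 : F) : Fin m → F) ≠ 0 := by
    intro h
    have := congrFun h ⟨0, hm⟩
    simp at this
  exact ⟨Submodule.span F {(fun _ => (1 : F) : Fin m → F)}, finrank_span_singleton hv⟩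

/-- Flag double counting: counting pairs `(I', U)` with `I ≤ I'`, `dim I' = i + 1`, `I' ≤ U ∈ E`. -/
theorem flag_count {r i : ℕ} (E : Set (Submodule F V)) (hE : ∀ U ∈ E, finrank F U = r)
    (I : Submodule F V) (hi : finrank F I = i) (hir : i < r) :
    {U ∈ E | I ≤ U}.ncard * numSubspaces F (r - i) 1
      = ∑ I' ∈ (Set.toFinite {I' : Submodule F V | finrank F I' = i + 1 ∧ I ≤ I'}).toFinset,
          {U ∈ E | I' ≤ U}.ncard := by
  classical
  set S := {I' : Submodule F V | finrank F I' = i + 1 ∧ I ≤ I'} with hSdef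
  set E' := {U ∈ E | I ≤ U} with hE'def
  have key := sum_filter_card_comm (Set.toFinite S).toFinset (Set.toFinite E').toFinset
    (fun I' U => I' ≤ U)
  -- LHS of key: each summand equals {U ∈ E | I' ≤ U}.ncard
  have hL : ∀ I' ∈ (Set.toFinite S).toFinset,
      ((Set.toFinite E').toFinset.filter (fun U => I' ≤ U)).card = {U ∈ E | I' ≤ U}.ncard := by
    intro I' hI'
    rw [Set.Finite.mem_toFinset] at hI'
    rw [filter_toFinset_card]
    congr 1
    ext U
    simp only [hE'def, Set.mem_setOf_eq]
    exact ⟨fun ⟨⟨h1, _⟩, h3⟩ => ⟨h1, h3⟩, fun ⟨h1, h3⟩ => ⟨⟨h1, le_trans hI'.2 h3⟩, h3⟩⟩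
  -- RHS of key: each summand equals numSubspaces F (r-i) 1
  have hR : ∀ U ∈ (Set.toFinite E').toFinset,
      ((Set.toFinite S).toFinset.filter (fun I' => I' ≤ U)).card = numSubspaces F (r - i) 1 := by
    intro U hU
    rw [Set.Finite.mem_toFinset] at hU
    rw [filter_toFinset_card]
    have : {x ∈ S | x ≤ U} = {I' : Submodule F V | finrank F I' = i + 1 ∧ I ≤ I' ∧ I' ≤ U} := by
      ext I'; simp only [hSdef, Set.mem_setOf_eq]; tauto
    rw [this, ncard_interval I U hU.2 (i + 1) (by omega), hi, hE U hU.1]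
    congr 1
    omega
  rw [Finset.sum_congr rfl hL, Finset.sum_congr rfl hR, Finset.sum_const, smul_eq_mul,
    ← Set.ncard_eq_toFinset_card _ (Set.toFinite E')] at key
  exact key.symm


theorem inf_span_singleton_eq_bot (I : Submodule F V) (x : V) (hx : x ∉ I) :
    I ⊓ Submodule.span F {x} = ⊥ := by
  rw [eq_bot_iff]
  rintro y ⟨hyI, hy⟩
  rw [SetLike.mem_coe, Submodule.mem_span_singleton] at hy
  obtain ⟨c, rfl⟩ := hy
  rcases eq_or_ne c 0 with rfl | hc
  · simp
  · exact absurd (by simpa [smul_smul, inv_mul_cancel₀ hc] using I.smul_mem c⁻¹ hyI) hx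

theorem finrank_sup_span_singleton (I : Submodule F V) (x : V) (hx : x ∉ I) :
    finrank F ↥(I ⊔ Submodule.span F {x}) = finrank F I + 1 := by
  have h := Submodule.finrank_sup_add_finrank_inf_eq I (Submodule.span F {x})
  rw [inf_span_singleton_eq_bot I x hx, finrank_bot, add_zero,
    finrank_span_singleton (show x ≠ 0 from fun h0 => hx (by rw [h0]; exact I.zero_mem))] at h
  exact h

theorem exists_decomp (J : Submodule F V) (j : ℕ) (hJ : finrank F J = j + 1) :
    ∃ (J'' : Submodule F V) (v : V), J'' ≤ J ∧ finrank F J'' = j ∧ v ∈ J ∧ v ∉ J'' ∧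
      J'' ⊔ Submodule.span F {v} = J := by
  let b : Basis (Fin (j + 1)) F J := Module.finBasisOfFinrankEq F J hJ
  set g : Fin (j + 1) → V := fun k => (b k : V) with hg
  have hli : LinearIndependent F g :=
    b.linearIndependent.map' J.subtype (Submodule.ker_subtype J)
  refine ⟨Submodule.span F (Set.range (g ∘ Fin.castSucc)), g (Fin.last j), ?_, ?_, ?_, ?_, ?_⟩
  · rw [Submodule.span_le]
    rintro x ⟨k, rfl⟩
    exact (b k.castSucc).2
  · rw [finrank_span_eq_card (hli.comp Fin.castSucc (Fin.castSucc_injective j))]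
    simp
  · exact (b (Fin.last j)).2
  · have hrange : Set.range (g ∘ Fin.castSucc) = g '' (Set.range Fin.castSucc) := by
      rw [Set.range_comp]
    rw [hrange]
    refine LinearIndependent.notMem_span_image hli ?_
    rintro ⟨k, hk⟩
    exact absurd hk (Fin.castSucc_lt_last k).ne
  · have h1 : Submodule.span F (Set.range g) = J := by
      have h2 : Submodule.map J.subtype ⊤ = J := Submodule.map_subtype_top J
      rw [← b.span_eq, Submodule.map_span] at h2
      rw [← h2]
      congr 1
      ext x
      simp [hg]
    have h2 : Set.range g = Set.range (g ∘ Fin.castSucc) ∪ {g (Fin.last j)} := by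
      ext x
      constructor
      · rintro ⟨k, rfl⟩
        rcases Fin.eq_castSucc_or_eq_last k with ⟨k', rfl⟩ | rfl
        · exact Or.inl ⟨k', rfl⟩
        · exact Or.inr rfl
      · rintro (⟨k, rfl⟩ | rfl)
        · exact ⟨k.castSucc, rfl⟩
        · exact ⟨Fin.last j, rfl⟩
    rw [← h1, h2, Submodule.span_union]


theorem partition_rec (E : Set (Submodule F V)) (I J'' : Submodule F V) (v : V)
    (hv : v ∉ I ⊔ J'') (Jfin : Finset V) (hJfin : ∀ x, x ∈ Jfin ↔ x ∈ J'') :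
    {U ∈ E | I ≤ U ∧ U ⊓ (J'' ⊔ Submodule.span F {v}) = ⊥}.ncard
      + ∑ w ∈ Jfin, {U ∈ E | I ⊔ Submodule.span F {w + v} ≤ U ∧ U ⊓ J'' = ⊥}.ncard
      = {U ∈ E | I ≤ U ∧ U ⊓ J'' = ⊥}.ncard := by
  classical
  have hvJ'' : v ∉ J'' := fun h => hv (Submodule.mem_sup_right h)
  set J := J'' ⊔ Submodule.span F {v} with hJdef
  have hvJ : v ∈ J := Submodule.mem_sup_right (Submodule.mem_span_singleton_self v)
  set sA := {U ∈ E | I ≤ U ∧ U ⊓ J = ⊥} with hsA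
  set sT := fun w => {U ∈ E | I ⊔ Submodule.span F {w + v} ≤ U ∧ U ⊓ J'' = ⊥} with hsT
  set sBig := {U ∈ E | I ≤ U ∧ U ⊓ J'' = ⊥} with hsBig
  have hwv_ne : ∀ w ∈ J'', w + v ≠ 0 := by
    intro w hw h0
    exact hvJ'' (by rw [show v = -w by linear_combination (norm := module) h0]; exact J''.neg_mem hw)
  have hwvJ : ∀ w ∈ J'', w + v ∈ J := fun w hw => J.add_mem (Submodule.mem_sup_left hw) hvJ
  have hunion : (Set.toFinite sBig).toFinset
      = (Set.toFinite sA).toFinset ∪ Jfin.biUnion (fun w => (Set.toFinite (sT w)).toFinset) := by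
    ext U
    simp only [Set.Finite.mem_toFinset, Finset.mem_union, Finset.mem_biUnion]
    constructor
    · rintro ⟨hUE, hIU, hdisj⟩
      by_cases hUJ : U ⊓ J = ⊥
      · exact Or.inl ⟨hUE, hIU, hUJ⟩
      · right
        obtain ⟨x, hxUJ, hx0⟩ := (Submodule.ne_bot_iff _).mp hUJ
        obtain ⟨hxU, hxJ⟩ := hxUJ
        rw [SetLike.mem_coe] at hxU
        rw [SetLike.mem_coe, hJdef, Submodule.mem_sup] at hxJ
        obtain ⟨y, hy, z, hz, hyz⟩ := hxJ
        rw [Submodule.mem_span_singleton] at hz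
        obtain ⟨c, rfl⟩ := hz
        have hc : c ≠ 0 := by
          rintro rfl
          apply hx0
          have hxJ'' : x ∈ J'' := by rw [← hyz]; simpa using hy
          have : x ∈ U ⊓ J'' := ⟨hxU, hxJ''⟩
          rwa [hdisj, Submodule.mem_bot] at this
        refine ⟨c⁻¹ • y, (hJfin _).mpr (J''.smul_mem _ hy), hUE, ?_, hdisj⟩
        have hwv : c⁻¹ • y + v = c⁻¹ • x := by
          rw [← hyz, smul_add, smul_smul, inv_mul_cancel₀ hc, one_smul]
        refine sup_le hIU ?_
        rw [Submodule.span_le, Set.singleton_subset_iff, SetLike.mem_coe, hwv]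
        exact U.smul_mem _ hxU
    · rintro (⟨hUE, hIU, hdisj⟩ | ⟨w, hw, hUE, hleU, hdisj⟩)
      · refine ⟨hUE, hIU, ?_⟩
        rw [eq_bot_iff, ← hdisj]
        exact inf_le_inf_left U le_sup_left
      · exact ⟨hUE, le_trans le_sup_left hleU, hdisj⟩
  have hdisj1 : Disjoint (Set.toFinite sA).toFinset
      (Jfin.biUnion (fun w => (Set.toFinite (sT w)).toFinset)) := by
    rw [Finset.disjoint_left]
    intro U hU hU'
    rw [Set.Finite.mem_toFinset] at hU
    rw [Finset.mem_biUnion] at hU'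
    obtain ⟨w, hw, hUT⟩ := hU'
    rw [Set.Finite.mem_toFinset] at hUT
    have hwJ'' : w ∈ J'' := (hJfin w).mp hw
    have h1 : w + v ∈ U := hUT.2.1 (Submodule.mem_sup_right (Submodule.mem_span_singleton_self _))
    have : w + v ∈ U ⊓ J := ⟨h1, hwvJ w hwJ''⟩
    rw [hU.2.2, Submodule.mem_bot] at this
    exact hwv_ne w hwJ'' this
  have hdisjT : ∀ w ∈ Jfin, ∀ w' ∈ Jfin, w ≠ w' →
      Disjoint (Set.toFinite (sT w)).toFinset (Set.toFinite (sT w')).toFinset := by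
    intro w hw w' hw' hne
    rw [Finset.disjoint_left]
    intro U hU hU'
    rw [Set.Finite.mem_toFinset] at hU hU'
    have h1 : w + v ∈ U := hU.2.1 (Submodule.mem_sup_right (Submodule.mem_span_singleton_self _))
    have h2 : w' + v ∈ U := hU'.2.1 (Submodule.mem_sup_right (Submodule.mem_span_singleton_self _))
    have h3 : w - w' ∈ U := by
      have := U.sub_mem h1 h2
      simpa using this
    have h4 : w - w' ∈ J'' := J''.sub_mem ((hJfin w).mp hw) ((hJfin w').mp hw')
    have : w - w' ∈ U ⊓ J'' := ⟨h3, h4⟩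
    rw [hU.2.2, Submodule.mem_bot, sub_eq_zero] at this
    exact hne this
  rw [Set.ncard_eq_toFinset_card _ (Set.toFinite sBig), hunion,
    Finset.card_union_of_disjoint hdisj1, Finset.card_biUnion hdisjT,
    ← Set.ncard_eq_toFinset_card _ (Set.toFinite sA)]
  congr 1
  refine Finset.sum_congr rfl fun w hw => ?_
  rw [← Set.ncard_eq_toFinset_card _ (Set.toFinite (sT w))]


end Aux

section Main
variable {F : Type*} [Field F] [Fintype F] {n r t lam : ℕ}
variable (htr : t ≤ r) (hrn : r ≤ n)
variable (D : Set (Submodule F (Fin n → F)))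
variable (hblocks : ∀ U ∈ D, Module.finrank F U = r)
variable (hdesign : ∀ T : Submodule F (Fin n → F), Module.finrank F T = t →
      {U ∈ D | T ≤ U}.ncard = lam)

include htr hrn hblocks hdesign in
theorem lam_i : ∀ d i : ℕ, i + d = t → ∀ I : Submodule F (Fin n → F), finrank F I = i →
    {U ∈ D | I ≤ U}.ncard * numSubspaces F (n - t) (r - t)
      = lam * {U : Submodule F (Fin n → F) | finrank F U = r ∧ I ≤ U}.ncard := by
  intro d
  induction d with
  | zero =>
    intro i hi I hI
    have hit : i = t := by omega
    subst hit
    rw [hdesign I hI]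
    congr 1
    have hset : {U : Submodule F (Fin n → F) | finrank F U = r ∧ I ≤ U}
        = {U : Submodule F (Fin n → F) | finrank F U = r ∧ I ≤ U ∧ U ≤ ⊤} := by
      ext U; simp
    rw [hset, ncard_interval I ⊤ le_top r (by rw [hI]; omega), hI, finrank_top F (Fin n → F),
      Module.finrank_fin_fun]
  | succ d ih =>
    intro i hi I hI
    have hit : i < t := by omega
    set S := {I' : Submodule F (Fin n → F) | finrank F I' = i + 1 ∧ I ≤ I'} with hS
    set E₀ : Set (Submodule F (Fin n → F)) := {U | finrank F U = r} with hE0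
    have hflagD := flag_count D hblocks I hI (by omega)
    have hflag0 := flag_count E₀ (fun U hU => hU) I hI (by omega)
    have hIH : ∀ I' ∈ (Set.toFinite S).toFinset,
        {U ∈ D | I' ≤ U}.ncard * numSubspaces F (n - t) (r - t)
          = lam * {U ∈ E₀ | I' ≤ U}.ncard := by
      intro I' hI'
      rw [Set.Finite.mem_toFinset] at hI'
      exact ih (i + 1) (by omega) I' hI'.1
    have key : ({U ∈ D | I ≤ U}.ncard * numSubspaces F (n - t) (r - t))
          * numSubspaces F (r - i) 1
        = (lam * {U ∈ E₀ | I ≤ U}.ncard) * numSubspaces F (r - i) 1 := by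
      calc ({U ∈ D | I ≤ U}.ncard * numSubspaces F (n - t) (r - t))
            * numSubspaces F (r - i) 1
          = ({U ∈ D | I ≤ U}.ncard * numSubspaces F (r - i) 1)
            * numSubspaces F (n - t) (r - t) := by ring
        _ = (∑ I' ∈ (Set.toFinite S).toFinset, {U ∈ D | I' ≤ U}.ncard)
            * numSubspaces F (n - t) (r - t) := by rw [hflagD]
        _ = ∑ I' ∈ (Set.toFinite S).toFinset,
              {U ∈ D | I' ≤ U}.ncard * numSubspaces F (n - t) (r - t) := Finset.sum_mul _ _ _
        _ = ∑ I' ∈ (Set.toFinite S).toFinset, lam * {U ∈ E₀ | I' ≤ U}.ncard :=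
              Finset.sum_congr rfl hIH
        _ = lam * ∑ I' ∈ (Set.toFinite S).toFinset, {U ∈ E₀ | I' ≤ U}.ncard := by
              rw [Finset.mul_sum]
        _ = lam * ({U ∈ E₀ | I ≤ U}.ncard * numSubspaces F (r - i) 1) := by rw [hflag0]
        _ = (lam * {U ∈ E₀ | I ≤ U}.ncard) * numSubspaces F (r - i) 1 := by ring
    have hpos : 0 < numSubspaces F (r - i) 1 := numSubspaces_one_pos (F := F) (by omega)
    have := Nat.eq_of_mul_eq_mul_right hpos key
    rw [this]
    rfl

include htr hrn hblocks hdesign in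
theorem main_rec : ∀ j : ℕ, ∀ i : ℕ, ∀ I J : Submodule F (Fin n → F), finrank F I = i →
    finrank F J = j → I ⊓ J = ⊥ → i + j ≤ t →
    {U ∈ D | I ≤ U ∧ U ⊓ J = ⊥}.ncard * numSubspaces F (n - t) (r - t)
      = lam * {U : Submodule F (Fin n → F) | finrank F U = r ∧ I ≤ U ∧ U ⊓ J = ⊥}.ncard := by
  intro j
  induction j with
  | zero =>
    intro i I J hI hJ hIJ hij
    have hJbot : J = ⊥ := Submodule.finrank_eq_zero.mp hJ
    subst hJbot
    have h1 : {U ∈ D | I ≤ U ∧ U ⊓ ⊥ = ⊥} = {U ∈ D | I ≤ U} := by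
      ext U; simp
    have h2 : {U : Submodule F (Fin n → F) | finrank F U = r ∧ I ≤ U ∧ U ⊓ ⊥ = ⊥}
        = {U : Submodule F (Fin n → F) | finrank F U = r ∧ I ≤ U} := by
      ext U; simp
    rw [h1, h2]
    exact lam_i htr hrn D hblocks hdesign (t - i) i (by omega) I hI
  | succ j ih =>
    intro i I J hI hJ hIJ hij
    obtain ⟨J'', v, hJ''J, hJ''rk, hvJ, hvJ'', hsup⟩ := exists_decomp J j hJ
    have hIJ'' : I ⊓ J'' = ⊥ := by
      rw [eq_bot_iff, ← hIJ]
      exact inf_le_inf_left I hJ''J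
    have hv : v ∉ I ⊔ J'' := by
      intro hmem
      rw [Submodule.mem_sup] at hmem
      obtain ⟨a, ha, w₀, hw₀, hav⟩ := hmem
      have haJ : a ∈ J := by
        have := J.sub_mem hvJ (hJ''J hw₀)
        rw [show v - w₀ = a by linear_combination (norm := module) hav.symm] at this
        exact this
      have : a ∈ I ⊓ J := ⟨ha, haJ⟩
      rw [hIJ, Submodule.mem_bot] at this
      subst this
      apply hvJ''
      rw [show v = w₀ by linear_combination (norm := module) hav.symm]
      exact hw₀
    classical
    set Jfin := (Set.toFinite (J'' : Set (Fin n → F))).toFinset with hJfin'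
    have hJfin : ∀ x, x ∈ Jfin ↔ x ∈ J'' := by
      intro x; rw [hJfin', Set.Finite.mem_toFinset, SetLike.mem_coe]
    set E₀ : Set (Submodule F (Fin n → F)) := {U | finrank F U = r} with hE0
    have hpartD := partition_rec D I J'' v hv Jfin hJfin
    have hpart0 := partition_rec E₀ I J'' v hv Jfin hJfin
    rw [hsup] at hpartD hpart0
    -- facts about I_w
    have hIw : ∀ w ∈ Jfin, finrank F ↥(I ⊔ Submodule.span F {w + v}) = i + 1 ∧
        (I ⊔ Submodule.span F {w + v}) ⊓ J'' = ⊥ := by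
      intro w hw
      have hwJ'' : w ∈ J'' := (hJfin w).mp hw
      have hwvI : w + v ∉ I := by
        intro hmem
        apply hv
        have : (w + v) - w ∈ I ⊔ J'' :=
          Submodule.sub_mem _ (Submodule.mem_sup_left hmem) (Submodule.mem_sup_right hwJ'')
        rwa [show w + v - w = v by abel] at this
      constructor
      · rw [finrank_sup_span_singleton I (w + v) hwvI, hI]
      · rw [eq_bot_iff]
        rintro x ⟨hx1, hx2⟩
        rw [SetLike.mem_coe, Submodule.mem_sup] at hx1
        obtain ⟨a, ha, z, hz, haz⟩ := hx1
        rw [Submodule.mem_span_singleton] at hz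
        obtain ⟨c, rfl⟩ := hz
        rcases eq_or_ne c 0 with rfl | hc
        · have hxa : x = a := by linear_combination (norm := module) haz.symm
          subst hxa
          have : x ∈ I ⊓ J'' := ⟨ha, hx2⟩
          rwa [hIJ'', Submodule.mem_bot] at this
        · exfalso
          apply hv
          have hv2 : v = c⁻¹ • (x - a) - w := by
            have : x - a = c • (w + v) := by linear_combination (norm := module) haz.symm
            rw [this, smul_smul, inv_mul_cancel₀ hc, one_smul]
            abel
          rw [hv2]
          have hxa : x - a ∈ I ⊔ J'' :=
            Submodule.sub_mem _ (Submodule.mem_sup_right hx2) (Submodule.mem_sup_left ha)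
          exact Submodule.sub_mem _ (Submodule.smul_mem _ _ hxa) (Submodule.mem_sup_right hwJ'')
    -- apply the inductive hypothesis
    have hIHw : ∀ w ∈ Jfin,
        {U ∈ D | I ⊔ Submodule.span F {w + v} ≤ U ∧ U ⊓ J'' = ⊥}.ncard
            * numSubspaces F (n - t) (r - t)
          = lam * {U ∈ E₀ | I ⊔ Submodule.span F {w + v} ≤ U ∧ U ⊓ J'' = ⊥}.ncard := by
      intro w hw
      exact ih (i + 1) _ J'' (hIw w hw).1 hJ''rk (hIw w hw).2 (by omega)
    have hIH'' : {U ∈ D | I ≤ U ∧ U ⊓ J'' = ⊥}.ncard * numSubspaces F (n - t) (r - t)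
        = lam * {U ∈ E₀ | I ≤ U ∧ U ⊓ J'' = ⊥}.ncard :=
      ih i I J'' hI hJ''rk hIJ'' (by omega)
    set c := numSubspaces F (n - t) (r - t)
    set T := ∑ w ∈ Jfin, lam * {U ∈ E₀ | I ⊔ Submodule.span F {w + v} ≤ U ∧ U ⊓ J'' = ⊥}.ncard
      with hT
    have hchain : {U ∈ D | I ≤ U ∧ U ⊓ J = ⊥}.ncard * c + T
        = lam * {U ∈ E₀ | I ≤ U ∧ U ⊓ J = ⊥}.ncard + T := by
      have e1 : {U ∈ D | I ≤ U ∧ U ⊓ J = ⊥}.ncard * c + T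
          = {U ∈ D | I ≤ U ∧ U ⊓ J'' = ⊥}.ncard * c := by
        rw [← hpartD, add_mul, Finset.sum_mul]
        congr 1
        exact Finset.sum_congr rfl (fun w hw => (hIHw w hw).symm)
      have e2 : lam * {U ∈ E₀ | I ≤ U ∧ U ⊓ J = ⊥}.ncard + T
          = lam * {U ∈ E₀ | I ≤ U ∧ U ⊓ J'' = ⊥}.ncard := by
        rw [← hpart0, Nat.mul_add, Finset.mul_sum]
      rw [e1, e2, hIH'']
    have := Nat.add_right_cancel hchain
    rw [this]
    rfl

end Main

theorem stmt_7 {F : Type*} [Field F] [Fintype F] {n r t lam i j : ℕ}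
    (htpos : 1 ≤ t) (htr : t ≤ r) (hrn : r ≤ n)
    (D : Set (Submodule F (Fin n → F)))
    (hblocks : ∀ U ∈ D, Module.finrank F U = r)
    (hdesign : ∀ T : Submodule F (Fin n → F), Module.finrank F T = t →
      {U ∈ D | T ≤ U}.ncard = lam)
    (I J : Submodule F (Fin n → F))
    (hI : Module.finrank F I = i) (hJ : Module.finrank F J = j)
    (hij : i + j ≤ t) (hIJ : I ⊓ J = ⊥) :
    {U ∈ D | I ≤ U ∧ J ⊓ U = ⊥}.ncard * numSubspaces F (n - t) (r - t) =
      (Fintype.card F) ^ (j * (r - i)) * lam * numSubspaces F (n - i - j) (r - i) := by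
  have hset : {U ∈ D | I ≤ U ∧ J ⊓ U = ⊥} = {U ∈ D | I ≤ U ∧ U ⊓ J = ⊥} := by
    ext U
    simp only [Set.mem_setOf_eq]
    rw [inf_comm]
  rw [hset, main_rec htr hrn D hblocks hdesign j i I J hI hJ hIJ hij,
    ncard_complete I J hIJ r (by omega), hI, hJ, Module.finrank_fin_fun]
  ring
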